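/- Under SIC decoding user 1 first in an L-user uplink NOMA cluster, the minimum powers satisfying all rate constraints with equality are P_l^min = 2^{Σ_{k=l+1}^L R_k^min}(2^{R_l^min} − 1)σ²/|h_l|² for each l; i.e., if each user k > l transmits at P_k^min, then P_l = P_l^min achieves R_l = R_l^min exactly. The constraint set is nonempty if and only if P_l^max ≥ P_l^min for all l. -/

import Mathlib

lemma two_rpow_pos (x : ℝ) : 0 < (2:ℝ) ^ x := Real.rpow_pos_of_pos (by norm_num) x

lemma ioo_split {l L : ℕ} (h : l + 1 < L) :
    Finset.Ioo l L = insert (l+1) (Finset.Ioo (l+1) L) := by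
  rw [Finset.Ioo_insert_left h, Finset.Ico_add_one_left_eq_Ioo]

/-- Interference identity: with minimal powers, Σ_{k∈Ioo l L} Pmin k g k + σ² = 2^{T l} σ². -/
lemma interf_eq (L : ℕ) (g Rmin : ℕ → ℝ) (σ2 : ℝ)
    (hg : ∀ l ∈ Finset.range L, 0 < g l) (hσ : 0 < σ2)
    (Pmin : ℕ → ℝ)
    (hPmin : ∀ l, Pmin l =
      (2:ℝ) ^ (∑ k ∈ Finset.Ioo l L, Rmin k) * ((2:ℝ) ^ (Rmin l) - 1) * σ2 / g l) :
    ∀ d l, L ≤ l + d →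
      (∑ k ∈ Finset.Ioo l L, Pmin k * g k) + σ2
        = (2:ℝ) ^ (∑ k ∈ Finset.Ioo l L, Rmin k) * σ2 := by
  intro d
  induction d with
  | zero =>
    intro l hl
    simp only [Nat.add_zero] at hl
    rw [Finset.Ioo_eq_empty (by omega)]
    simp
  | succ d ih =>
    intro l hl
    by_cases hcase : L ≤ l + 1
    · have he : Finset.Ioo l L = ∅ := by
        apply Finset.eq_empty_of_forall_notMem
        intro x hx; rw [Finset.mem_Ioo] at hx; omega
      rw [he]; simp
    · push_neg at hcase
      have hsub : l + 1 ∉ Finset.Ioo (l+1) L := by simp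
      have hglt : 0 < g (l+1) := hg _ (Finset.mem_range.mpr hcase)
      have hihv := ih (l+1) (by omega)
      rw [ioo_split hcase, Finset.sum_insert hsub, Finset.sum_insert hsub,
        hPmin (l+1)]
      rw [div_mul_cancel₀ _ (ne_of_gt hglt)]
      have : (∑ k ∈ Finset.Ioo (l+1) L, Pmin k * g k)
          = (2:ℝ) ^ (∑ k ∈ Finset.Ioo (l+1) L, Rmin k) * σ2 - σ2 := by
        linarith [hihv]
      rw [this, Real.rpow_add (by norm_num : (0:ℝ) < 2)]
      ring

theorem min_power_characterization (L : ℕ) (g Rmin Pmax : ℕ → ℝ) (σ2 : ℝ)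
    (hg : ∀ l ∈ Finset.range L, 0 < g l)
    (hR : ∀ l ∈ Finset.range L, 0 ≤ Rmin l)
    (hσ : 0 < σ2)
    (Pmin : ℕ → ℝ)
    (hPmin : ∀ l, Pmin l =
      (2:ℝ) ^ (∑ k ∈ Finset.Ioo l L, Rmin k) * ((2:ℝ) ^ (Rmin l) - 1) * σ2 / g l) :
    (∀ l ∈ Finset.range L,
      Real.logb 2 (1 + Pmin l * g l / ((∑ k ∈ Finset.Ioo l L, Pmin k * g k) + σ2))
        = Rmin l) ∧
    ((∃ P : ℕ → ℝ, ∀ l ∈ Finset.range L,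
        0 ≤ P l ∧ P l ≤ Pmax l ∧
        Rmin l ≤ Real.logb 2
          (1 + P l * g l / ((∑ k ∈ Finset.Ioo l L, P k * g k) + σ2))) ↔
      ∀ l ∈ Finset.range L, Pmin l ≤ Pmax l) := by
  have hI := interf_eq L g Rmin σ2 hg hσ Pmin hPmin
  -- rate equality at Pmin
  have hrate : ∀ l ∈ Finset.range L,
      Real.logb 2 (1 + Pmin l * g l / ((∑ k ∈ Finset.Ioo l L, Pmin k * g k) + σ2))
        = Rmin l := by
    intro l hl
    have hlL := Finset.mem_range.mp hl
    have hgl := hg l hl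
    have hIeq := hI L l (by omega)
    have hT : 0 < (2:ℝ) ^ (∑ k ∈ Finset.Ioo l L, Rmin k) := two_rpow_pos _
    rw [hIeq, hPmin l, div_mul_cancel₀ _ (ne_of_gt hgl)]
    have : (2:ℝ) ^ (∑ k ∈ Finset.Ioo l L, Rmin k) * ((2:ℝ) ^ (Rmin l) - 1) * σ2 /
        ((2:ℝ) ^ (∑ k ∈ Finset.Ioo l L, Rmin k) * σ2) = (2:ℝ) ^ (Rmin l) - 1 := by
      field_simp
    rw [this]
    rw [show (1:ℝ) + ((2:ℝ) ^ (Rmin l) - 1) = (2:ℝ) ^ (Rmin l) by ring]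
    exact Real.logb_rpow (by norm_num) (by norm_num)
  -- nonnegativity of Pmin
  have hPmin_nonneg : ∀ l ∈ Finset.range L, 0 ≤ Pmin l := by
    intro l hl
    rw [hPmin l]
    have h1 : (0:ℝ) ≤ (2:ℝ) ^ (Rmin l) - 1 := by
      have : (2:ℝ) ^ (0:ℝ) ≤ (2:ℝ) ^ (Rmin l) :=
        Real.rpow_le_rpow_of_exponent_le (by norm_num) (hR l hl)
      simpa using this
    exact div_nonneg (mul_nonneg (mul_nonneg (two_rpow_pos _).le h1) hσ.le) (hg l hl).le
  refine ⟨hrate, ?_, ?_⟩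
  · rintro ⟨P, hP⟩ l hl
    -- show Pmin k ≤ P k for all k ∈ range L by downward induction
    have key : ∀ d k, L ≤ k + d → k < L → Pmin k ≤ P k := by
      intro d
      induction d with
      | zero => intro k h1 h2; omega
      | succ d ih =>
        intro k h1 h2
        have hk := Finset.mem_range.mpr h2
        obtain ⟨hP0, hPmax, hPrate⟩ := hP k hk
        have hgk := hg k hk
        -- interference comparison
        have hmono : (∑ j ∈ Finset.Ioo k L, Pmin j * g j)
            ≤ (∑ j ∈ Finset.Ioo k L, P j * g j) := by
          apply Finset.sum_le_sum
          intro j hj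
          have hj' := Finset.mem_Ioo.mp hj
          have hjR : j ∈ Finset.range L := Finset.mem_range.mpr hj'.2
          exact mul_le_mul_of_nonneg_right (ih j (by omega) hj'.2) (le_of_lt (hg j hjR))
        have hIk := hI L k (by omega)
        have hInn : 0 ≤ (∑ j ∈ Finset.Ioo k L, P j * g j) := by
          apply Finset.sum_nonneg
          intro j hj
          have hj' := Finset.mem_Ioo.mp hj
          have hjR : j ∈ Finset.range L := Finset.mem_range.mpr hj'.2
          exact mul_nonneg (hP j hjR).1 (le_of_lt (hg j hjR))
        set I : ℝ := (∑ j ∈ Finset.Ioo k L, P j * g j) with hIdef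
        have hIpos : 0 < I + σ2 := by linarith
        have hxpos : 0 < 1 + P k * g k / (I + σ2) := by
          have : 0 ≤ P k * g k / (I + σ2) := div_nonneg (mul_nonneg hP0 hgk.le) hIpos.le
          linarith
        have h2r : (2:ℝ) ^ (Rmin k) ≤ 1 + P k * g k / (I + σ2) := by
          calc (2:ℝ) ^ (Rmin k) ≤ (2:ℝ) ^ (Real.logb 2 (1 + P k * g k / (I + σ2))) :=
                Real.rpow_le_rpow_of_exponent_le (by norm_num) hPrate
            _ = _ := Real.rpow_logb (by norm_num) (by norm_num) hxpos
        have h3 : ((2:ℝ) ^ (Rmin k) - 1) * (I + σ2) ≤ P k * g k := by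
          have h4 : (2:ℝ) ^ (Rmin k) - 1 ≤ P k * g k / (I + σ2) := by linarith
          calc ((2:ℝ) ^ (Rmin k) - 1) * (I + σ2)
              ≤ (P k * g k / (I + σ2)) * (I + σ2) :=
                mul_le_mul_of_nonneg_right h4 hIpos.le
            _ = P k * g k := by field_simp
        have hRk1 : (0:ℝ) ≤ (2:ℝ) ^ (Rmin k) - 1 := by
          have : (2:ℝ) ^ (0:ℝ) ≤ (2:ℝ) ^ (Rmin k) :=
            Real.rpow_le_rpow_of_exponent_le (by norm_num) (hR k hk)
          simpa using this
        have h5 : ((2:ℝ) ^ (Rmin k) - 1) *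
            ((∑ j ∈ Finset.Ioo k L, Pmin j * g j) + σ2) ≤ P k * g k := by
          calc ((2:ℝ) ^ (Rmin k) - 1) * ((∑ j ∈ Finset.Ioo k L, Pmin j * g j) + σ2)
              ≤ ((2:ℝ) ^ (Rmin k) - 1) * (I + σ2) :=
                mul_le_mul_of_nonneg_left (by linarith) hRk1
            _ ≤ P k * g k := h3
        rw [hIk] at h5
        have hPmingk : Pmin k * g k = (2:ℝ) ^ (∑ j ∈ Finset.Ioo k L, Rmin j) *
            ((2:ℝ) ^ (Rmin k) - 1) * σ2 := by
          rw [hPmin k, div_mul_cancel₀ _ (ne_of_gt hgk)]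
        have h6 : Pmin k * g k ≤ P k * g k := by
          rw [hPmingk]; nlinarith [h5]
        exact le_of_mul_le_mul_right h6 hgk
    have hlL := Finset.mem_range.mp hl
    exact le_trans (key L l (by omega) hlL) (hP l hl).2.1
  · intro h
    refine ⟨Pmin, fun l hl => ⟨hPmin_nonneg l hl, h l hl, le_of_eq (hrate l hl).symm⟩⟩
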